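/- Fix r ∈ ℚ and let T = (1 - x - x·y - r·x²·y)⁻¹ in the ring ℚ⟦x,y⟧ of formal power series in two variables, which is the bivariate generating function of the Riordan array (1/(1-x), x(1+rx)/(1-x)). Then the array of coefficients t(n,k) = [x^n y^k] T is centrally symmetric: t(n,k) = t(n, n-k) for all n ≥ 0 and all 0 ≤ k ≤ n, and moreover t(n,k) = 0 for k > n and t(n,0) = 1 for all n. -/

import Mathlib

open MvPowerSeries Finsupp

noncomputable def Efn (n k : ℕ) : Fin 2 →₀ ℕ :=
  Finsupp.single (0 : Fin 2) n + Finsupp.single (1 : Fin 2) k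

lemma Efn_apply0 (n k : ℕ) : Efn n k 0 = n := by simp [Efn]
lemma Efn_apply1 (n k : ℕ) : Efn n k 1 = k := by simp [Efn]

lemma Efn_le (a b n k : ℕ) : Efn a b ≤ Efn n k ↔ a ≤ n ∧ b ≤ k := by
  rw [Finsupp.le_def]
  constructor
  · intro h
    exact ⟨by simpa [Efn_apply0] using h 0, by simpa [Efn_apply1] using h 1⟩
  · rintro ⟨h1, h2⟩ s
    fin_cases s <;> simpa [Efn_apply0, Efn_apply1]

lemma Efn_sub (a b n k : ℕ) : Efn n k - Efn a b = Efn (n - a) (k - b) := by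
  ext s
  fin_cases s <;> simp [Finsupp.tsub_apply, Efn_apply0, Efn_apply1]

lemma Efn_eq_zero (n k : ℕ) : Efn n k = 0 ↔ n = 0 ∧ k = 0 := by
  constructor
  · intro h
    exact ⟨by simpa [Efn_apply0] using DFunLike.congr_fun h 0,
           by simpa [Efn_apply1] using DFunLike.congr_fun h 1⟩
  · rintro ⟨rfl, rfl⟩
    simp [Efn]

theorem stmt_4 (r : ℚ)
    (t : ℕ → ℕ → ℚ)
    (ht : ∀ n k : ℕ, t n k =
      MvPowerSeries.coeff (Finsupp.single (0 : Fin 2) n + Finsupp.single (1 : Fin 2) k)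
        ((1 - MvPowerSeries.X (0 : Fin 2) - MvPowerSeries.X (0 : Fin 2) * MvPowerSeries.X (1 : Fin 2)
            - MvPowerSeries.C r * MvPowerSeries.X (0 : Fin 2) ^ 2
              * MvPowerSeries.X (1 : Fin 2) : MvPowerSeries (Fin 2) ℚ)⁻¹)) :
    (∀ n k : ℕ, k ≤ n → t n k = t n (n - k)) ∧
    (∀ n k : ℕ, n < k → t n k = 0) ∧
    (∀ n : ℕ, t n 0 = 1) := by
  classical
  set S : MvPowerSeries (Fin 2) ℚ :=
    1 - X (0 : Fin 2) - X (0 : Fin 2) * X (1 : Fin 2)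
      - C r * X (0 : Fin 2) ^ 2 * X (1 : Fin 2) with hS
  set T : MvPowerSeries (Fin 2) ℚ := S⁻¹ with hTdef
  have hconst : constantCoeff S = 1 := by
    simp [hS]
  have hinv : S * T = 1 :=
    MvPowerSeries.mul_inv_cancel S (by rw [hconst]; exact one_ne_zero)
  have hm1 : (X (0 : Fin 2) : MvPowerSeries (Fin 2) ℚ) = monomial (Efn 1 0) 1 := by
    rw [X_def]; congr 1; simp [Efn]
  have hm2 : (X (0 : Fin 2) * X (1 : Fin 2) : MvPowerSeries (Fin 2) ℚ)
      = monomial (Efn 1 1) 1 := by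
    rw [X_def, X_def, monomial_mul_monomial, one_mul]; rfl
  have hm3 : (C r * X (0 : Fin 2) ^ 2 * X (1 : Fin 2) : MvPowerSeries (Fin 2) ℚ)
      = monomial (Efn 2 1) r := by
    rw [← monomial_zero_eq_C_apply, X_pow_eq, X_def, monomial_mul_monomial,
      monomial_mul_monomial, mul_one, mul_one]
    congr 1
    simp [Efn]
  have hT : T = 1 + monomial (Efn 1 0) 1 * T + monomial (Efn 1 1) 1 * T
      + monomial (Efn 2 1) r * T := by
    rw [← hm1, ← hm2, ← hm3]
    have := hinv
    rw [hS] at this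
    linear_combination this
  have ht' : ∀ n k : ℕ, t n k = coeff (Efn n k) T := fun n k => ht n k
  -- master recurrence
  have trec : ∀ n k : ℕ, t n k =
      (if n = 0 ∧ k = 0 then 1 else 0)
      + (if 1 ≤ n then t (n - 1) k else 0)
      + (if 1 ≤ n ∧ 1 ≤ k then t (n - 1) (k - 1) else 0)
      + (if 2 ≤ n ∧ 1 ≤ k then r * t (n - 2) (k - 1) else 0) := by
    intro n k
    rw [ht' n k]
    conv_lhs => rw [hT]
    simp only [map_add, coeff_one, coeff_monomial_mul, Efn_le, Efn_sub, Efn_eq_zero,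
      one_mul, Nat.sub_zero, zero_le, true_and, and_true, le_refl, ht']
  -- vanishing above the diagonal
  have hvanish : ∀ n k : ℕ, n < k → t n k = 0 := by
    intro n
    induction n using Nat.strong_induction_on with
    | _ n ih =>
      intro k hk
      rw [trec n k]
      have h0 : ¬ (n = 0 ∧ k = 0) := by omega
      rw [if_neg h0]
      have e1 : (if 1 ≤ n then t (n - 1) k else 0) = 0 := by
        split_ifs with h
        · exact ih (n - 1) (by omega) k (by omega)
        · rfl
      have e2 : (if 1 ≤ n ∧ 1 ≤ k then t (n - 1) (k - 1) else 0) = 0 := by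
        split_ifs with h
        · exact ih (n - 1) (by omega) (k - 1) (by omega)
        · rfl
      have e3 : (if 2 ≤ n ∧ 1 ≤ k then r * t (n - 2) (k - 1) else 0) = 0 := by
        split_ifs with h
        · rw [ih (n - 2) (by omega) (k - 1) (by omega), mul_zero]
        · rfl
      rw [e1, e2, e3]; ring
  -- left column
  have hcol : ∀ n : ℕ, t n 0 = 1 := by
    intro n
    induction n with
    | zero => rw [trec 0 0]; norm_num
    | succ m ihm =>
      rw [trec (m + 1) 0]
      simp [ihm]
  -- diagonal
  have hdiag : ∀ n : ℕ, t n n = 1 := by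
    intro n
    induction n with
    | zero => exact hcol 0
    | succ m ihm =>
      rw [trec (m + 1) (m + 1)]
      have h0 : ¬ (m + 1 = 0 ∧ m + 1 = 0) := by omega
      rw [if_neg h0, if_pos (by omega : 1 ≤ m + 1),
        if_pos (⟨by omega, by omega⟩ : 1 ≤ m + 1 ∧ 1 ≤ m + 1)]
      simp only [Nat.add_sub_cancel]
      rw [hvanish m (m + 1) (by omega), ihm]
      have e3 : (if 2 ≤ m + 1 ∧ 1 ≤ m + 1 then r * t (m + 1 - 2) m else 0) = 0 := by
        split_ifs with h
        · rw [hvanish (m + 1 - 2) m (by omega), mul_zero]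
        · rfl
      rw [e3]; ring
  -- symmetry
  have hsym : ∀ n k : ℕ, k ≤ n → t n k = t n (n - k) := by
    intro n
    induction n using Nat.strong_induction_on with
    | _ n ih =>
      intro k hk
      rcases Nat.eq_zero_or_pos k with rfl | hk1
      · simp only [Nat.sub_zero]
        rw [hcol n, hdiag n]
      rcases Nat.lt_or_ge k n with hkn | hkn
      · -- 1 ≤ k ≤ n - 1, so n ≥ 2
        have hn2 : 2 ≤ n := by omega
        rw [trec n k, trec n (n - k)]
        have h0 : ¬ (n = 0 ∧ k = 0) := by omega
        have h0' : ¬ (n = 0 ∧ n - k = 0) := by omega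
        rw [if_neg h0, if_neg h0', if_pos (by omega : 1 ≤ n),
          if_pos (by omega : 1 ≤ n),
          if_pos (⟨by omega, hk1⟩ : 1 ≤ n ∧ 1 ≤ k),
          if_pos (⟨by omega, by omega⟩ : 1 ≤ n ∧ 1 ≤ n - k),
          if_pos (⟨hn2, hk1⟩ : 2 ≤ n ∧ 1 ≤ k),
          if_pos (⟨hn2, by omega⟩ : 2 ≤ n ∧ 1 ≤ n - k)]
        have e1 : t (n - 1) k = t (n - 1) (n - k - 1) := by
          rw [ih (n - 1) (by omega) k (by omega)]
          congr 1; omega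
        have e2 : t (n - 1) (k - 1) = t (n - 1) (n - k) := by
          rw [ih (n - 1) (by omega) (k - 1) (by omega)]
          congr 1; omega
        have e3 : t (n - 2) (k - 1) = t (n - 2) (n - k - 1) := by
          rw [ih (n - 2) (by omega) (k - 1) (by omega)]
          congr 1; omega
        rw [e1, e2, e3]; ring
      · -- k = n
        have hkn2 : k = n := by omega
        rw [hkn2, Nat.sub_self, hdiag n, hcol n]
  exact ⟨hsym, hvanish, hcol⟩
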